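/- Let ρ and σ be density matrices on a finite-dimensional complex Hilbert space with the support of ρ contained in the support of σ. Then −2·log₂ F^{1/2}(ρ, σ) ≤ D(ρ‖σ), where F(ρ,σ) = (Tr√(√σ ρ √σ))² is the fidelity and D(ρ‖σ) = Tr(ρ(log₂ ρ − log₂ σ)) is the quantum relative entropy. Equivalently, −log₂ F(ρ,σ) ≤ D(ρ‖σ). -/

import Mathlib

open Matrix ComplexOrder Classical

/-- The positive semidefinite square root of a positive semidefinite matrix
(the definition `Matrix.PosSemidef.sqrt` of the older Mathlib, removed since). -/
noncomputable def Matrix.PosSemidef.sqrt {n : Type*} [Fintype n] [DecidableEq n]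
    {A : Matrix n n ℂ} (hA : A.PosSemidef) : Matrix n n ℂ :=
  hA.1.eigenvectorUnitary.1 * diagonal ((↑) ∘ (√·) ∘ hA.1.eigenvalues) *
  (star hA.1.eigenvectorUnitary : Matrix n n ℂ)

/-- `Tr √A` for a positive semidefinite matrix (junk value `0` otherwise). -/
noncomputable def traceSqrt {n : Type*} [Fintype n] [DecidableEq n]
    (A : Matrix n n ℂ) : ℝ :=
  if h : A.PosSemidef then (h.sqrt.trace).re else 0

/-- The fidelity `F(ρ,σ) = (Tr √(√σ ρ √σ))²` (junk value if `σ` is not PSD). -/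
noncomputable def fidelity {n : Type*} [Fintype n] [DecidableEq n]
    (ρ σ : Matrix n n ℂ) : ℝ :=
  if h : σ.PosSemidef then (traceSqrt (h.sqrt * ρ * h.sqrt)) ^ 2 else 0

/-- Base-2 matrix logarithm of a Hermitian matrix, via the functional calculus
(junk value `0` if not Hermitian). -/
noncomputable def matLog2 {n : Type*} [Fintype n] [DecidableEq n]
    (A : Matrix n n ℂ) : Matrix n n ℂ :=
  if h : A.IsHermitian then h.cfc (Real.logb 2) else 0

/-- Quantum relative entropy `D(ρ‖σ) = Tr (ρ (log₂ ρ − log₂ σ))`. -/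
noncomputable def relEnt {n : Type*} [Fintype n] [DecidableEq n]
    (ρ σ : Matrix n n ℂ) : ℝ :=
  ((ρ * (matLog2 ρ - matLog2 σ)).trace).re


section AuxLemmas
set_option linter.unusedSectionVars false
variable {n : Type*} [Fintype n] [DecidableEq n]

lemma psd_sqrt_star {A : Matrix n n ℂ} (hA : A.PosSemidef) : star hA.sqrt = hA.sqrt := by
  rw [Matrix.PosSemidef.sqrt, star_mul, star_mul, star_star, Matrix.star_eq_conjTranspose (diagonal _),
    Matrix.diagonal_conjTranspose, ← mul_assoc]
  congr 3
  funext i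
  simp
lemma psd_sqrt_mul_self {A : Matrix n n ℂ} (hA : A.PosSemidef) : hA.sqrt * hA.sqrt = A := by
  have hU2 : star (hA.1.eigenvectorUnitary : Matrix n n ℂ) * (hA.1.eigenvectorUnitary : Matrix n n ℂ) = 1 :=
    Matrix.mem_unitaryGroup_iff'.mp hA.1.eigenvectorUnitary.2
  have hdec : A = (hA.1.eigenvectorUnitary : Matrix n n ℂ) * diagonal (Complex.ofReal ∘ hA.1.eigenvalues)
      * star (hA.1.eigenvectorUnitary : Matrix n n ℂ) := hA.1.spectral_theorem
  conv_rhs => rw [hdec]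
  rw [Matrix.PosSemidef.sqrt]
  calc _ = (hA.1.eigenvectorUnitary : Matrix n n ℂ) * diagonal ((↑) ∘ (√·) ∘ hA.1.eigenvalues) *
      (star (hA.1.eigenvectorUnitary : Matrix n n ℂ) * (hA.1.eigenvectorUnitary : Matrix n n ℂ)) *
      diagonal ((↑) ∘ (√·) ∘ hA.1.eigenvalues) * star (hA.1.eigenvectorUnitary : Matrix n n ℂ) := by
        simp only [mul_assoc]
    _ = _ := by
      rw [hU2, mul_one, mul_assoc (_ : Matrix n n ℂ) (diagonal _) (diagonal _), diagonal_mul_diagonal]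
      congr 3
      funext i
      simp only [Function.comp_apply]
      rw [← Complex.ofReal_mul, Real.mul_self_sqrt (hA.eigenvalues_nonneg i)]
lemma dot_self_re (x : n → ℂ) : (star x ⬝ᵥ x).re = ∑ k, ‖x k‖ ^ 2 := by
  simp only [dotProduct, Complex.re_sum, Pi.star_apply]
  refine Finset.sum_congr rfl fun k _ => ?_
  rw [RCLike.star_def, Complex.conj_mul']
  norm_cast

/-- Cauchy–Schwarz for the complex dot product. -/
lemma cs_dot (x y : n → ℂ) :
    (star x ⬝ᵥ y).re ≤ Real.sqrt ((star x ⬝ᵥ x).re) * Real.sqrt ((star y ⬝ᵥ y).re) := by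
  rw [dot_self_re, dot_self_re]
  calc (star x ⬝ᵥ y).re ≤ ‖star x ⬝ᵥ y‖ := Complex.re_le_norm _
    _ ≤ ∑ k, ‖x k‖ * ‖y k‖ := by
        refine (norm_sum_le _ _).trans ?_
        refine Finset.sum_le_sum fun k _ => ?_
        simp [Pi.star_apply, norm_mul]
    _ ≤ Real.sqrt (∑ k, ‖x k‖ ^ 2) * Real.sqrt (∑ k, ‖y k‖ ^ 2) := by
        have h := Finset.sum_mul_sq_le_sq_mul_sq Finset.univ (fun k => ‖x k‖) (fun k => ‖y k‖)
        have h0 : (0:ℝ) ≤ ∑ k, ‖x k‖ * ‖y k‖ :=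
          Finset.sum_nonneg fun k _ => mul_nonneg (norm_nonneg _) (norm_nonneg _)
        calc ∑ k, ‖x k‖ * ‖y k‖ = Real.sqrt ((∑ k, ‖x k‖ * ‖y k‖) ^ 2) := (Real.sqrt_sq h0).symm
          _ ≤ Real.sqrt ((∑ k, ‖x k‖ ^ 2) * ∑ k, ‖y k‖ ^ 2) := Real.sqrt_le_sqrt h
          _ = _ := Real.sqrt_mul (Finset.sum_nonneg fun k _ => sq_nonneg _) _

lemma trace_conj (U A : Matrix n n ℂ) (hU : U * star U = 1) :
    (star U * A * U).trace = A.trace := by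
  rw [mul_assoc, Matrix.trace_mul_comm, mul_assoc, hU, mul_one]

lemma conj_diag_entry (W A : Matrix n n ℂ) (i : n) :
    (star W * A * W) i i = star (fun k => W k i) ⬝ᵥ (A *ᵥ fun k => W k i) := by
  simp only [Matrix.mul_apply, Matrix.mulVec, dotProduct, Pi.star_apply,
    Matrix.star_apply, Finset.sum_mul, Finset.mul_sum]
  rw [Finset.sum_comm]
  exact Finset.sum_congr rfl fun l _ => Finset.sum_congr rfl fun k _ => by ring

lemma trace_conj_diag (U : Matrix n n ℂ) (hU2 : star U * U = 1) (d : n → ℂ) :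
    (U * Matrix.diagonal d * star U).trace = ∑ i, d i := by
  have h1 := trace_conj (star U) (Matrix.diagonal d) (by rwa [star_star])
  rw [star_star] at h1
  rw [h1, Matrix.trace_diagonal]

lemma trace_prod_eq (U V : Matrix n n ℂ) (hU1 : U * star U = 1) (hU2 : star U * U = 1)
    (d e : n → ℂ) :
    (U * Matrix.diagonal d * star U * (V * Matrix.diagonal e * star V)).trace
      = ∑ i, ∑ j, d i * e j * ((Complex.normSq ((star U * V) i j) : ℝ) : ℂ) := by
  have h2 : star U * (U * Matrix.diagonal d * star U * (V * Matrix.diagonal e * star V)) * U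
      = Matrix.diagonal d * ((star U * V) * (Matrix.diagonal e * star (star U * V))) := by
    rw [Matrix.star_mul, star_star]
    simp only [← mul_assoc]
    rw [hU2, one_mul]
  rw [← trace_conj U _ hU1, h2]
  set M := star U * V with hM
  rw [Matrix.trace]
  refine Finset.sum_congr rfl fun i _ => ?_
  rw [Matrix.diag_apply, Matrix.diagonal_mul, Matrix.mul_apply, Finset.mul_sum]
  refine Finset.sum_congr rfl fun j _ => ?_
  rw [Matrix.diagonal_mul, Matrix.star_apply, RCLike.star_def,
    show M i j * (e j * (starRingEnd ℂ) (M i j))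
      = e j * (M i j * (starRingEnd ℂ) (M i j)) from by ring,
    Complex.mul_conj]
  ring

lemma trace_prod_re (U V : Matrix n n ℂ) (hU1 : U * star U = 1) (hU2 : star U * U = 1)
    (d e : n → ℝ) :
    ((U * Matrix.diagonal (Complex.ofReal ∘ d) * star U *
      (V * Matrix.diagonal (Complex.ofReal ∘ e) * star V)).trace).re
      = ∑ i, ∑ j, d i * e j * Complex.normSq ((star U * V) i j) := by
  rw [trace_prod_eq U V hU1 hU2, Complex.re_sum]
  refine Finset.sum_congr rfl fun i _ => ?_
  rw [Complex.re_sum]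
  refine Finset.sum_congr rfl fun j _ => ?_
  simp only [Function.comp_apply, ← Complex.ofReal_mul, Complex.ofReal_re]

lemma re_trace_le_traceSqrt (B : Matrix n n ℂ) :
    (B.trace).re ≤ traceSqrt (star B * B) := by
  have h : (star B * B).PosSemidef := by
    rw [Matrix.star_eq_conjTranspose]; exact Matrix.posSemidef_conjTranspose_mul_self B
  set W := (h.1.eigenvectorUnitary : Matrix n n ℂ) with hWdef
  have hW1 : W * star W = 1 := Matrix.mem_unitaryGroup_iff.mp h.1.eigenvectorUnitary.2
  have hW2 : star W * W = 1 := Matrix.mem_unitaryGroup_iff'.mp h.1.eigenvectorUnitary.2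
  have hts : traceSqrt (star B * B) = ∑ i, Real.sqrt (h.1.eigenvalues i) := by
    rw [traceSqrt, dif_pos h,
      show h.sqrt = W * Matrix.diagonal (Complex.ofReal ∘ Real.sqrt ∘ h.1.eigenvalues) * star W
        from rfl,
      trace_conj_diag W hW2 _, Complex.re_sum]
    simp
  rw [hts, ← trace_conj W B hW1, Matrix.trace, Complex.re_sum]
  refine Finset.sum_le_sum fun i _ => ?_
  rw [Matrix.diag_apply, conj_diag_entry]
  have hw1 : (star (fun k => W k i) ⬝ᵥ (fun k => W k i)).re = 1 := by
    have h1 : star (fun k => W k i) ⬝ᵥ (fun k => W k i) = (star W * W) i i := by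
      simp only [Matrix.mul_apply, Matrix.star_apply, dotProduct, Pi.star_apply]
    rw [h1, hW2, Matrix.one_apply_eq, Complex.one_re]
  have hBw : star (B *ᵥ (fun k => W k i)) ⬝ᵥ (B *ᵥ (fun k => W k i))
      = (star W * (star B * B) * W) i i := by
    rw [conj_diag_entry, ← Matrix.mulVec_mulVec, Matrix.dotProduct_mulVec,
      Matrix.star_mulVec, Matrix.star_eq_conjTranspose,
      ← Matrix.dotProduct_mulVec, ← Matrix.dotProduct_mulVec]
  have hmu : (star (B *ᵥ (fun k => W k i)) ⬝ᵥ (B *ᵥ (fun k => W k i))).re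
      = h.1.eigenvalues i := by
    rw [hBw, hWdef, (show star (h.1.eigenvectorUnitary : Matrix n n ℂ) * (star B * B) *
      (h.1.eigenvectorUnitary : Matrix n n ℂ) = diagonal (RCLike.ofReal ∘ h.1.eigenvalues)
      from by simpa using h.1.conjStarAlgAut_star_eigenvectorUnitary), Matrix.diagonal_apply_eq]
    simp
  calc (star (fun k => W k i) ⬝ᵥ (B *ᵥ (fun k => W k i))).re
      ≤ Real.sqrt ((star (fun k => W k i) ⬝ᵥ (fun k => W k i)).re) *
        Real.sqrt ((star (B *ᵥ (fun k => W k i)) ⬝ᵥ (B *ᵥ (fun k => W k i))).re) := cs_dot _ _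
    _ = Real.sqrt (h.1.eigenvalues i) := by rw [hw1, hmu, Real.sqrt_one, one_mul]

lemma concaveOn_logb2 : ConcaveOn ℝ (Set.Ioi 0) (Real.logb 2) := by
  have h := (strictConcaveOn_log_Ioi.concaveOn).smul
    (c := (Real.log 2)⁻¹) (by positivity)
  have he : Real.logb 2 = fun x => (Real.log 2)⁻¹ • Real.log x := by
    funext x
    simp [Real.logb, smul_eq_mul, div_eq_inv_mul]
  rw [he]; exact h

lemma sum_sqrt_pos {ι : Type*} [Fintype ι] (P Q : ι → ℝ)
    (hP : ∀ i, 0 ≤ P i) (hQ : ∀ i, 0 ≤ Q i) (hPsum : ∑ i, P i = 1)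
    (hPQ : ∀ i, Q i = 0 → P i = 0) :
    0 < ∑ i, Real.sqrt (P i * Q i) := by
  obtain ⟨i, hi⟩ : ∃ i, P i ≠ 0 := by
    by_contra hc
    push_neg at hc
    simp [hc] at hPsum
  have hPi : 0 < P i := lt_of_le_of_ne (hP i) (Ne.symm hi)
  have hQi : 0 < Q i := lt_of_le_of_ne (hQ i) fun hq => hi (hPQ i hq.symm)
  refine Finset.sum_pos' (fun j _ => Real.sqrt_nonneg _) ⟨i, Finset.mem_univ i, ?_⟩
  exact Real.sqrt_pos.mpr (mul_pos hPi hQi)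

lemma classical_bound {ι : Type*} [Fintype ι] (P Q : ι → ℝ)
    (hP : ∀ i, 0 ≤ P i) (hQ : ∀ i, 0 ≤ Q i) (hPsum : ∑ i, P i = 1)
    (hPQ : ∀ i, Q i = 0 → P i = 0) (t : ℝ) (ht : ∑ i, Real.sqrt (P i * Q i) ≤ t) :
    -2 * Real.logb 2 t ≤ ∑ i, P i * (Real.logb 2 (P i) - Real.logb 2 (Q i)) := by
  classical
  set s := Finset.univ.filter (fun i => 0 < P i) with hs
  have hmem : ∀ i ∈ s, 0 < P i := fun i hi => (Finset.mem_filter.mp hi).2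
  have hmemQ : ∀ i ∈ s, 0 < Q i := fun i hi =>
    lt_of_le_of_ne (hQ i) fun hq => (hmem i hi).ne' (hPQ i hq.symm)
  have hPs : ∑ i ∈ s, P i = 1 := by
    rw [← hPsum]
    refine Finset.sum_subset (Finset.filter_subset _ _) fun i _ hi => ?_
    rw [hs, Finset.mem_filter] at hi
    push_neg at hi
    exact le_antisymm (hi (Finset.mem_univ i)) (hP i)
  have hSs : ∑ i ∈ s, Real.sqrt (P i * Q i) ≤ t := by
    refine le_trans ?_ ht
    exact Finset.sum_le_sum_of_subset_of_nonneg (Finset.filter_subset _ _)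
      (fun i _ _ => Real.sqrt_nonneg _)
  have hSpos : 0 < ∑ i ∈ s, Real.sqrt (P i * Q i) := by
    obtain ⟨i, hi⟩ : ∃ i, P i ≠ 0 := by
      by_contra hc; push_neg at hc; simp [hc] at hPsum
    have hPi : 0 < P i := lt_of_le_of_ne (hP i) (Ne.symm hi)
    have hQi : 0 < Q i := lt_of_le_of_ne (hQ i) fun hq => hi (hPQ i hq.symm)
    refine Finset.sum_pos' (fun j _ => Real.sqrt_nonneg _)
      ⟨i, Finset.mem_filter.mpr ⟨Finset.mem_univ i, hPi⟩, Real.sqrt_pos.mpr (mul_pos hPi hQi)⟩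
  have hjensen := concaveOn_logb2.le_map_sum (t := s) (w := P)
    (p := fun i => Real.sqrt (Q i / P i)) (fun i hi => hP i) hPs
    (fun i hi => Set.mem_Ioi.mpr (Real.sqrt_pos.mpr (div_pos (hmemQ i hi) (hmem i hi))))
  have harg : ∑ i ∈ s, P i • Real.sqrt (Q i / P i) = ∑ i ∈ s, Real.sqrt (P i * Q i) := by
    refine Finset.sum_congr rfl fun i hi => ?_
    have hPi := hmem i hi
    have hPne : Real.sqrt (P i) ≠ 0 := ne_of_gt (Real.sqrt_pos.mpr hPi)
    rw [smul_eq_mul, Real.sqrt_div (hQ i), Real.sqrt_mul (hP i)]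
    calc P i * (Real.sqrt (Q i) / Real.sqrt (P i))
        = (Real.sqrt (P i) * Real.sqrt (P i)) * (Real.sqrt (Q i) / Real.sqrt (P i)) := by
          rw [Real.mul_self_sqrt hPi.le]
      _ = Real.sqrt (P i) * Real.sqrt (Q i) := by
          field_simp
  have hterm : ∀ i ∈ s, P i • Real.logb 2 (Real.sqrt (Q i / P i))
      = -(1/2) * (P i * (Real.logb 2 (P i) - Real.logb 2 (Q i))) := by
    intro i hi
    have hPi := hmem i hi
    have hQi := hmemQ i hi
    rw [smul_eq_mul, Real.logb, Real.log_sqrt (div_nonneg (hQ i) (hP i)),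
      Real.log_div hQi.ne' hPi.ne']
    rw [Real.logb, Real.logb]
    field_simp
    ring
  rw [harg] at hjensen
  rw [Finset.sum_congr rfl hterm] at hjensen
  have hfull : ∑ i, P i * (Real.logb 2 (P i) - Real.logb 2 (Q i))
      = ∑ i ∈ s, P i * (Real.logb 2 (P i) - Real.logb 2 (Q i)) := by
    symm
    refine Finset.sum_subset (Finset.filter_subset _ _) fun i _ hi => ?_
    rw [hs, Finset.mem_filter] at hi
    push_neg at hi
    have : P i = 0 := le_antisymm (hi (Finset.mem_univ i)) (hP i)
    simp [this]
  rw [hfull]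
  have hlogmono : Real.logb 2 (∑ i ∈ s, Real.sqrt (P i * Q i)) ≤ Real.logb 2 t :=
    Real.logb_le_logb_of_le one_lt_two hSpos hSs
  have hfin := hjensen.trans hlogmono
  rw [← Finset.mul_sum] at hfin
  linarith

end AuxLemmas

set_option maxHeartbeats 1000000 in
theorem stmt_9 {n : Type*} [Fintype n] [DecidableEq n]
    (ρ σ : Matrix n n ℂ)
    (hρ : ρ.PosSemidef) (hρ1 : ρ.trace = 1)
    (hσ : σ.PosSemidef) (hσ1 : σ.trace = 1)
    (hsupp : ∀ v : n → ℂ, σ.mulVec v = 0 → ρ.mulVec v = 0) :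
    -2 * Real.logb 2 (Real.sqrt (fidelity ρ σ)) ≤ relEnt ρ σ ∧
    -Real.logb 2 (fidelity ρ σ) ≤ relEnt ρ σ := by
  have hU1 : (hρ.1.eigenvectorUnitary : Matrix n n ℂ) * star (hρ.1.eigenvectorUnitary : Matrix n n ℂ) = 1 :=
    Matrix.mem_unitaryGroup_iff.mp hρ.1.eigenvectorUnitary.2
  have hU2 : star (hρ.1.eigenvectorUnitary : Matrix n n ℂ) * (hρ.1.eigenvectorUnitary : Matrix n n ℂ) = 1 :=
    Matrix.mem_unitaryGroup_iff'.mp hρ.1.eigenvectorUnitary.2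
  have hV1 : (hσ.1.eigenvectorUnitary : Matrix n n ℂ) * star (hσ.1.eigenvectorUnitary : Matrix n n ℂ) = 1 :=
    Matrix.mem_unitaryGroup_iff.mp hσ.1.eigenvectorUnitary.2
  have hV2 : star (hσ.1.eigenvectorUnitary : Matrix n n ℂ) * (hσ.1.eigenvectorUnitary : Matrix n n ℂ) = 1 :=
    Matrix.mem_unitaryGroup_iff'.mp hσ.1.eigenvectorUnitary.2
  -- abbreviations (plain defs to keep goals syntactic)
  set U : Matrix n n ℂ := (hρ.1.eigenvectorUnitary : Matrix n n ℂ) with hUdef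
  set V : Matrix n n ℂ := (hσ.1.eigenvectorUnitary : Matrix n n ℂ) with hVdef
  set p : n → ℝ := hρ.1.eigenvalues with hpdef
  set q : n → ℝ := hσ.1.eigenvalues with hqdef
  have hp0 : ∀ i, 0 ≤ p i := hρ.eigenvalues_nonneg
  have hq0 : ∀ i, 0 ≤ q i := hσ.eigenvalues_nonneg
  have hc0 : ∀ i j, 0 ≤ Complex.normSq ((star U * V) i j) := fun i j => Complex.normSq_nonneg _
  have hρdec : ρ = U * Matrix.diagonal (Complex.ofReal ∘ p) * star U := hρ.1.spectral_theorem
  have hσdec : σ = V * Matrix.diagonal (Complex.ofReal ∘ q) * star V := hσ.1.spectral_theorem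
  -- row sums of c
  have hMrow : ∀ i, ∑ j, Complex.normSq ((star U * V) i j) = 1 := by
    intro i
    have h1 : (star U * V) * star (star U * V) = 1 := by
      rw [Matrix.star_mul, star_star]
      calc star U * V * (star V * U) = star U * (V * star V) * U := by simp only [mul_assoc]
        _ = 1 := by rw [hV1, mul_one, hU2]
    have h2 : ((star U * V) * star (star U * V)) i i
        = ∑ j, ((Complex.normSq ((star U * V) i j) : ℝ) : ℂ) := by
      rw [Matrix.mul_apply]
      refine Finset.sum_congr rfl fun j _ => ?_
      rw [Matrix.star_apply, RCLike.star_def, Complex.mul_conj]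
    rw [h1, Matrix.one_apply_eq] at h2
    have h3 := congrArg Complex.re h2
    rw [Complex.one_re, Complex.re_sum] at h3
    simpa using h3.symm
  -- sum of eigenvalues
  have hps : ∑ i, p i = 1 := by
    have h1 : ρ.trace = ∑ i, ((p i : ℝ) : ℂ) := by
      conv_lhs => rw [hρdec]
      rw [trace_conj_diag U hU2]
      simp only [Function.comp_apply]
    rw [hρ1] at h1
    have h2 := congrArg Complex.re h1
    rw [Complex.one_re, Complex.re_sum] at h2
    simpa using h2.symm
  -- matrix logs
  have hLρ : matLog2 ρ = U * Matrix.diagonal (Complex.ofReal ∘ (Real.logb 2 ∘ p)) * star U := by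
    rw [matLog2, dif_pos hρ.1]; rfl
  have hLσ : matLog2 σ = V * Matrix.diagonal (Complex.ofReal ∘ (Real.logb 2 ∘ q)) * star V := by
    rw [matLog2, dif_pos hσ.1]; rfl
  -- relEnt decomposition
  have hD1 : ((ρ * matLog2 ρ).trace).re = ∑ i, p i * Real.logb 2 (p i) := by
    conv_lhs => rw [hLρ, hρdec]
    rw [trace_prod_re U U hU1 hU2]
    refine Finset.sum_congr rfl fun i _ => ?_
    rw [Finset.sum_eq_single i]
    · rw [hU2, Matrix.one_apply_eq]
      simp
    · intro j _ hj
      rw [hU2, Matrix.one_apply_ne (Ne.symm hj)]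
      simp
    · intro h; exact absurd (Finset.mem_univ i) h
  have hD2 : ((ρ * matLog2 σ).trace).re
      = ∑ i, ∑ j, p i * Real.logb 2 (q j) * Complex.normSq ((star U * V) i j) := by
    conv_lhs => rw [hLσ, hρdec]
    exact trace_prod_re U V hU1 hU2 _ _
  have hrel : relEnt ρ σ = ((ρ * matLog2 ρ).trace).re - ((ρ * matLog2 σ).trace).re := by
    rw [relEnt, mul_sub, Matrix.trace_sub, Complex.sub_re]
  -- support condition
  have hsup : ∀ i j, q j = 0 → p i * Complex.normSq ((star U * V) i j) = 0 := by
    intro i j hqj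
    have hv : σ *ᵥ ⇑(hσ.1.eigenvectorBasis j) = 0 := by
      rw [hσ.1.mulVec_eigenvectorBasis]
      rw [show hσ.1.eigenvalues j = q j from rfl, hqj, zero_smul]
    have hρv : ρ *ᵥ ⇑(hσ.1.eigenvectorBasis j) = 0 := hsupp _ hv
    have h2 : Matrix.diagonal (Complex.ofReal ∘ p) * star U = star U * ρ := by
      conv_rhs => rw [hρdec]
      symm
      calc star U * (U * Matrix.diagonal (Complex.ofReal ∘ p) * star U)
          = (star U * U) * Matrix.diagonal (Complex.ofReal ∘ p) * star U := by
            simp only [mul_assoc]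
        _ = Matrix.diagonal (Complex.ofReal ∘ p) * star U := by rw [hU2, one_mul]
    have h1 : Matrix.diagonal (Complex.ofReal ∘ p) *ᵥ (star U *ᵥ ⇑(hσ.1.eigenvectorBasis j)) = 0 := by
      rw [Matrix.mulVec_mulVec, h2, ← Matrix.mulVec_mulVec, hρv, Matrix.mulVec_zero]
    have h4 : (star U *ᵥ ⇑(hσ.1.eigenvectorBasis j)) i = (star U * V) i j := by
      rw [Matrix.mul_apply, Matrix.mulVec, dotProduct]
      refine Finset.sum_congr rfl fun k _ => ?_
      rw [hVdef, Matrix.IsHermitian.eigenvectorUnitary_apply]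
    have h3 : (p i : ℂ) * (star U * V) i j = 0 := by
      have h5 := congrFun h1 i
      rw [Matrix.mulVec_diagonal, h4] at h5
      exact h5
    rcases mul_eq_zero.mp h3 with h | h
    · rw [show p i = 0 from by exact_mod_cast h, zero_mul]
    · rw [h, map_zero, mul_zero]
  -- fidelity side
  have e1 : star hρ.sqrt = hρ.sqrt := by
    rw [Matrix.star_eq_conjTranspose]; exact psd_sqrt_star hρ
  have e2 : star hσ.sqrt = hσ.sqrt := by
    rw [Matrix.star_eq_conjTranspose]; exact psd_sqrt_star hσ
  have hBsb : star (hρ.sqrt * hσ.sqrt) * (hρ.sqrt * hσ.sqrt) = hσ.sqrt * ρ * hσ.sqrt := by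
    rw [Matrix.star_mul, e1, e2]
    calc hσ.sqrt * hρ.sqrt * (hρ.sqrt * hσ.sqrt)
        = hσ.sqrt * (hρ.sqrt * hρ.sqrt) * hσ.sqrt := by simp only [mul_assoc]
      _ = hσ.sqrt * ρ * hσ.sqrt := by rw [psd_sqrt_mul_self hρ]
  have hfid : fidelity ρ σ = traceSqrt (star (hρ.sqrt * hσ.sqrt) * (hρ.sqrt * hσ.sqrt)) ^ 2 := by
    rw [fidelity, dif_pos hσ, hBsb]
  have hS : ((hρ.sqrt * hσ.sqrt).trace).re
      = ∑ i, ∑ j, Real.sqrt (p i) * Real.sqrt (q j) * Complex.normSq ((star U * V) i j) := by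
    conv_lhs =>
      rw [show hρ.sqrt = U * Matrix.diagonal (Complex.ofReal ∘ (Real.sqrt ∘ p)) * star U from rfl,
        show hσ.sqrt = V * Matrix.diagonal (Complex.ofReal ∘ (Real.sqrt ∘ q)) * star V from rfl]
    exact trace_prod_re U V hU1 hU2 _ _
  have hSle := re_trace_le_traceSqrt (hρ.sqrt * hσ.sqrt)
  -- classical distributions
  set P : n × n → ℝ := fun x => p x.1 * Complex.normSq ((star U * V) x.1 x.2) with hPdef
  set Q : n × n → ℝ := fun x => q x.2 * Complex.normSq ((star U * V) x.1 x.2) with hQdef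
  have hPnn : ∀ x, 0 ≤ P x := fun x => mul_nonneg (hp0 _) (hc0 _ _)
  have hQnn : ∀ x, 0 ≤ Q x := fun x => mul_nonneg (hq0 _) (hc0 _ _)
  have hPsum : ∑ x, P x = 1 := by
    rw [Fintype.sum_prod_type]
    calc ∑ i, ∑ j, P (i, j) = ∑ i, p i * ∑ j, Complex.normSq ((star U * V) i j) := by
          refine Finset.sum_congr rfl fun i _ => ?_
          rw [Finset.mul_sum]
      _ = ∑ i, p i := by
          refine Finset.sum_congr rfl fun i _ => ?_
          rw [hMrow i, mul_one]
      _ = 1 := hps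
  have hPQ0 : ∀ x, Q x = 0 → P x = 0 := by
    intro x hx
    rcases mul_eq_zero.mp hx with h | h
    · exact hsup x.1 x.2 h
    · rw [hPdef]; simp only; rw [h, mul_zero]
  have hsqrtPQ : ∑ x, Real.sqrt (P x * Q x) = ((hρ.sqrt * hσ.sqrt).trace).re := by
    rw [hS, Fintype.sum_prod_type]
    refine Finset.sum_congr rfl fun i _ => Finset.sum_congr rfl fun j _ => ?_
    rw [hPdef, hQdef]
    simp only
    rw [show p i * Complex.normSq ((star U * V) i j) * (q j * Complex.normSq ((star U * V) i j))
        = (p i * q j) * (Complex.normSq ((star U * V) i j) * Complex.normSq ((star U * V) i j))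
        from by ring,
      Real.sqrt_mul (mul_nonneg (hp0 i) (hq0 j)),
      Real.sqrt_mul_self (hc0 i j), Real.sqrt_mul (hp0 i)]
  have hts : ∑ x, Real.sqrt (P x * Q x) ≤ traceSqrt (star (hρ.sqrt * hσ.sqrt) * (hρ.sqrt * hσ.sqrt)) := by
    rw [hsqrtPQ]; exact hSle
  have htpos : 0 < traceSqrt (star (hρ.sqrt * hσ.sqrt) * (hρ.sqrt * hσ.sqrt)) :=
    lt_of_lt_of_le (sum_sqrt_pos P Q hPnn hQnn hPsum hPQ0) hts
  have hcb := classical_bound P Q hPnn hQnn hPsum hPQ0 _ hts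
  -- identify the classical relative entropy with relEnt
  have hDT : ∑ x, P x * (Real.logb 2 (P x) - Real.logb 2 (Q x)) = relEnt ρ σ := by
    rw [hrel, hD1, hD2, Fintype.sum_prod_type]
    have hterm : ∀ i j, P (i, j) * (Real.logb 2 (P (i, j)) - Real.logb 2 (Q (i, j)))
        = p i * Complex.normSq ((star U * V) i j) * (Real.logb 2 (p i) - Real.logb 2 (q j)) := by
      intro i j
      by_cases hc : Complex.normSq ((star U * V) i j) = 0
      · simp [hPdef, hQdef, hc]
      by_cases hpz : p i = 0
      · simp [hPdef, hQdef, hpz]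
      have hqz : q j ≠ 0 := by
        intro hq
        exact (mul_ne_zero hpz hc) (hsup i j hq)
      rw [hPdef, hQdef]
      simp only
      rw [Real.logb_mul hpz hc, Real.logb_mul hqz hc]
      ring
    rw [Finset.sum_congr rfl fun i _ => Finset.sum_congr rfl fun j _ => hterm i j]
    have hrow : ∀ i, ∑ j, p i * Complex.normSq ((star U * V) i j) *
        (Real.logb 2 (p i) - Real.logb 2 (q j))
        = p i * Real.logb 2 (p i)
          - ∑ j, p i * Real.logb 2 (q j) * Complex.normSq ((star U * V) i j) := by
      intro i
      simp only [mul_sub]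
      rw [Finset.sum_sub_distrib]
      congr 1
      calc ∑ j, p i * Complex.normSq ((star U * V) i j) * Real.logb 2 (p i)
          = p i * Real.logb 2 (p i) * ∑ j, Complex.normSq ((star U * V) i j) := by
            rw [Finset.mul_sum]
            exact Finset.sum_congr rfl fun j _ => by ring
        _ = p i * Real.logb 2 (p i) := by rw [hMrow i, mul_one]
      exact Finset.sum_congr rfl fun j _ => by ring
    rw [Finset.sum_congr rfl fun i _ => hrow i, Finset.sum_sub_distrib]
  rw [hDT] at hcb
  constructor
  · have hsq : Real.sqrt (fidelity ρ σ)
        = traceSqrt (star (hρ.sqrt * hσ.sqrt) * (hρ.sqrt * hσ.sqrt)) := by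
      rw [hfid, Real.sqrt_sq htpos.le]
    rw [hsq]
    exact hcb
  · rw [hfid, Real.logb_pow]
    push_cast
    linarith
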